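/- For every j₁, j₂ ∈ {0,1,2,3} and every α ∈ R that is not divisible by τ, there exists a digit c ∈ D̃(j₁,j₂) such that τ² divides α − c in R. -/

import Mathlib

open Polynomial

noncomputable def P (μ : ℤ) : ℤ[X] := X ^ 4 - C μ * X ^ 3 - C (2 * μ) * X + 4

noncomputable abbrev Rg (μ : ℤ) := AdjoinRoot (P μ)

noncomputable def tau (μ : ℤ) : Rg μ := AdjoinRoot.root (P μ)

noncomputable def Dtil (μ : ℤ) (j₁ j₂ : ℕ) : Set (Rg μ) :=
  {0, 1, -1, 2, -2, 1 + tau μ, 1 - tau μ, -1 + tau μ, -1 - tau μ,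
   (-1 : Rg μ) ^ (j₁ / 2) * (2 + tau μ), (-1 : Rg μ) ^ j₁ * (2 - tau μ),
   1 + 2 * (μ : Rg μ) * (-1 : Rg μ) ^ (j₂ / 2) * tau μ,
   -1 + 2 * (μ : Rg μ) * (-1 : Rg μ) ^ j₂ * tau μ}

set_option maxHeartbeats 2000000 in
/-- For each digit set `D̃(j₁,j₂)` and each `α ∈ R` not divisible by `τ`, there is a
digit `c ∈ D̃(j₁,j₂)` with `τ² ∣ α − c`. -/
theorem stmt11 (μ : ℤ) (hμ : μ = 1 ∨ μ = -1) (j₁ j₂ : ℕ) (hj₁ : j₁ < 4) (hj₂ : j₂ < 4)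
    (α : Rg μ) (hα : ¬ tau μ ∣ α) :
    ∃ c ∈ Dtil μ j₁ j₂, tau μ ^ 2 ∣ (α - c) := by
  have hroot : AdjoinRoot.root (P μ) = tau μ := rfl
  have hrel : (tau μ)^4 - (μ : Rg μ)*(tau μ)^3 - 2*(μ : Rg μ)*(tau μ) + 4 = 0 := by
    have h : AdjoinRoot.mk (P μ) (X ^ 4 - C μ * X ^ 3 - C (2 * μ) * X + 4) = 0 :=
      AdjoinRoot.mk_self
    simp only [map_add, map_sub, map_mul, map_pow, AdjoinRoot.mk_X, AdjoinRoot.mk_C,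
      map_ofNat, eq_intCast] at h
    simpa [tau] using h
  set t : Rg μ := tau μ with ht_def
  have hm : (μ : Rg μ) * (μ : Rg μ) = 1 := by rcases hμ with rfl|rfl <;> norm_num
  have Dm : t^2 ∣ (4 - 2*(μ:Rg μ)*t) := ⟨(μ:Rg μ)*t - t^2, by linear_combination hrel⟩
  have Dp : t^2 ∣ (4 + 2*(μ:Rg μ)*t) :=
    ⟨2 + (μ:Rg μ)*t - (μ:Rg μ)*t^3, by linear_combination ((μ:Rg μ)*t+1)*hrel + (t^4+2*t^2)*hm⟩
  have D8 : t^2 ∣ (8 : Rg μ) :=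
    ⟨2 + 2*(μ:Rg μ)*t - t^2 - (μ:Rg μ)*t^3,
      by linear_combination ((μ:Rg μ)*t+2)*hrel + (t^4+2*t^2)*hm⟩
  have D2 : t^2 ∣ (2*t - 4*(μ:Rg μ)) :=
    ⟨(μ:Rg μ)*t^2 - t, by linear_combination (-(μ:Rg μ))*hrel - (2*t+t^3)*hm⟩
  have Dt : t^2 ∣ (4 + 2*t : Rg μ) := by
    rcases hμ with rfl|rfl
    · obtain ⟨w, hw⟩ := Dp; exact ⟨w, by push_cast at hw ⊢; linear_combination hw⟩
    · obtain ⟨w, hw⟩ := Dm; exact ⟨w, by push_cast at hw ⊢; linear_combination hw⟩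
  obtain ⟨q, rfl⟩ := AdjoinRoot.mk_surjective α
  obtain ⟨r, a, b, hq⟩ : ∃ r : Rg μ, ∃ a b : ℤ,
      AdjoinRoot.mk (P μ) q = (a : Rg μ) + (b : Rg μ) * t + t^2 * r := by
    refine ⟨AdjoinRoot.mk (P μ) (q /ₘ X^2), (q %ₘ X^2).coeff 0, (q %ₘ X^2).coeff 1, ?_⟩
    have h2 : (X^2 : ℤ[X]).Monic := monic_X_pow 2
    have hnd : (q %ₘ X^2).natDegree ≤ 1 := by
      have h := natDegree_modByMonic_lt q h2 (by
        intro h; have := congrArg natDegree h; simp at this)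
      simp only [natDegree_X_pow] at h
      omega
    have hmod := eq_X_add_C_of_natDegree_le_one hnd
    conv_lhs => rw [← modByMonic_add_div q (X^2), hmod]
    simp only [map_add, map_mul, map_pow, AdjoinRoot.mk_X, AdjoinRoot.mk_C, eq_intCast,
      map_intCast, hroot]
    ring
  obtain ⟨ρ, a2, b0, h0a, h8a, h0b, h2b, hdec⟩ :
      ∃ ρ : Rg μ, ∃ a2 b0 : ℤ, 0 ≤ a2 ∧ a2 < 8 ∧ 0 ≤ b0 ∧ b0 < 2 ∧
        AdjoinRoot.mk (P μ) q = (a2 : Rg μ) + (b0 : Rg μ) * t + t^2 * ρ := by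
    obtain ⟨w8, hw8⟩ := D8
    obtain ⟨w2, hw2⟩ := D2
    refine ⟨r + (((a + 4*μ*(b/2))/8 : ℤ) : Rg μ) * w8 + (((b/2 : ℤ)) : Rg μ) * w2,
      (a + 4*μ*(b/2)) % 8, b % 2, Int.emod_nonneg _ (by norm_num),
      Int.emod_lt_of_pos _ (by norm_num), Int.emod_nonneg _ (by norm_num),
      Int.emod_lt_of_pos _ (by norm_num), ?_⟩
    rw [hq]
    have e1 : a + 4*μ*(b/2) = 8 * ((a + 4*μ*(b/2))/8) + (a + 4*μ*(b/2)) % 8 :=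
      (Int.mul_ediv_add_emod _ _).symm
    have e2 : b = 2 * (b/2) + b % 2 := (Int.mul_ediv_add_emod _ _).symm
    have e1' := congrArg (fun z : ℤ => (z : Rg μ)) e1
    have e2' := congrArg (fun z : ℤ => (z : Rg μ)) e2
    push_cast at e1' e2'
    linear_combination (((a + 4*μ*(b/2))/8 : ℤ) : Rg μ) * hw8 + (((b/2 : ℤ)) : Rg μ) * hw2
      + e1' + t * e2'
  have hnd : ¬ t ∣ ((a2 : Rg μ) + (b0 : Rg μ) * t) := by
    intro ⟨w, hw⟩
    exact hα ⟨w + t * ρ, by rw [hdec, hw]; ring⟩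
  suffices h : ∃ c ∈ Dtil μ j₁ j₂, t^2 ∣ ((a2 : Rg μ) + (b0 : Rg μ) * t - c) by
    obtain ⟨c, hc, w, hw⟩ := h
    exact ⟨c, hc, ⟨w + ρ, by rw [hdec]; linear_combination hw⟩⟩
  clear hdec hq hα
  have mem : ∀ c ∈ ({0, 1, -1, 2, -2, 1 + t, 1 - t, -1 + t, -1 - t,
      (-1 : Rg μ) ^ (j₁ / 2) * (2 + t), (-1 : Rg μ) ^ j₁ * (2 - t),
      1 + 2 * (μ : Rg μ) * (-1 : Rg μ) ^ (j₂ / 2) * t,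
      -1 + 2 * (μ : Rg μ) * (-1 : Rg μ) ^ j₂ * t} : Set (Rg μ)), c ∈ Dtil μ j₁ j₂ := by
    intro c hc; exact hc
  interval_cases b0 <;> interval_cases a2
  -- b0 = 0
  · exact absurd ⟨0, by push_cast; ring⟩ hnd
  · exact ⟨1, mem _ (by tauto), ⟨0, by push_cast; ring⟩⟩
  · exact ⟨2, mem _ (by tauto), ⟨0, by push_cast; ring⟩⟩
  · refine ⟨-1 + 2 * (μ : Rg μ) * (-1 : Rg μ) ^ j₂ * t, mem _ (by tauto), ?_⟩
    rcases Nat.even_or_odd j₂ with he|he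
    · rw [he.neg_one_pow]
      obtain ⟨w, hw⟩ := Dm; exact ⟨w, by push_cast; linear_combination hw⟩
    · rw [he.neg_one_pow]
      obtain ⟨w, hw⟩ := Dp; exact ⟨w, by push_cast; linear_combination hw⟩
  · exact absurd ⟨(μ:Rg μ)*t^2 + 2*(μ:Rg μ) - t^3,
      by push_cast; linear_combination hrel⟩ hnd
  · refine ⟨1 + 2 * (μ : Rg μ) * (-1 : Rg μ) ^ (j₂/2) * t, mem _ (by tauto), ?_⟩
    rcases Nat.even_or_odd (j₂/2) with he|he
    · rw [he.neg_one_pow]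
      obtain ⟨w, hw⟩ := Dm; exact ⟨w, by push_cast; linear_combination hw⟩
    · rw [he.neg_one_pow]
      obtain ⟨w, hw⟩ := Dp; exact ⟨w, by push_cast; linear_combination hw⟩
  · refine ⟨-2, mem _ (by tauto), ?_⟩
    obtain ⟨w, hw⟩ := D8; exact ⟨w, by push_cast; linear_combination hw⟩
  · refine ⟨-1, mem _ (by tauto), ?_⟩
    obtain ⟨w, hw⟩ := D8; exact ⟨w, by push_cast; linear_combination hw⟩
  -- b0 = 1
  · exact absurd ⟨1, by push_cast; ring⟩ hnd
  · exact ⟨1 + t, mem _ (by tauto), ⟨0, by push_cast; ring⟩⟩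
  · refine ⟨(-1 : Rg μ) ^ (j₁/2) * (2 + t), mem _ (by tauto), ?_⟩
    rcases Nat.even_or_odd (j₁/2) with he|he
    · rw [he.neg_one_pow]; exact ⟨0, by push_cast; ring⟩
    · rw [he.neg_one_pow]
      obtain ⟨w, hw⟩ := Dt; exact ⟨w, by push_cast; linear_combination hw⟩
  · refine ⟨-1 - t, mem _ (by tauto), ?_⟩
    obtain ⟨w, hw⟩ := Dt; exact ⟨w, by push_cast; linear_combination hw⟩
  · exact absurd ⟨1 + (μ:Rg μ)*t^2 + 2*(μ:Rg μ) - t^3,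
      by push_cast; linear_combination hrel⟩ hnd
  · refine ⟨1 - t, mem _ (by tauto), ?_⟩
    obtain ⟨w, hw⟩ := Dt; exact ⟨w, by push_cast; linear_combination hw⟩
  · refine ⟨(-1 : Rg μ) ^ j₁ * (2 - t), mem _ (by tauto), ?_⟩
    rcases Nat.even_or_odd j₁ with he|he
    · rw [he.neg_one_pow]
      obtain ⟨w, hw⟩ := Dt; exact ⟨w, by push_cast; linear_combination hw⟩
    · rw [he.neg_one_pow]
      obtain ⟨w, hw⟩ := D8; exact ⟨w, by push_cast; linear_combination hw⟩
  · refine ⟨-1 + t, mem _ (by tauto), ?_⟩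
    obtain ⟨w, hw⟩ := D8; exact ⟨w, by push_cast; linear_combination hw⟩
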